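/- Let s be a nonzero real number, δ, λ ∈ ℂ, let β: ℝ → ℂ be differentiable with antiderivative Φ (Φ' = β), and let ξ: ℝ → ℂ be twice differentiable. Define Λ(x) = ξ(x)·exp(i·x/s + δ·Φ(x)). Then Λ satisfies the eigenvalue equation Λ''(x) - (2i/s)·(1 - i·s·β(x))·Λ'(x) - (2i/s)·(β(x) - (3is/2)·β(x)²)·Λ(x) = (2√2·λ/s)·Λ(x) for all x ∈ ℝ if and only if ξ satisfies ξ''(x) + 2(δ-1)·β(x)·ξ'(x) + [ (1 - 2√2·s·λ)/s² - (4i/s)·β(x) + (δ+1)(δ-3)·β(x)² + δ·β'(x) ]·ξ(x) = 0 for all x ∈ ℝ. -/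

import Mathlib

open Complex

/-- The substitution `Λ(x) = ξ(x) exp(ix/s + δ∫β)` transforms the
coherent-state eigenvalue equation
`Λ'' - (2i/s)(1 - isβ)Λ' - (2i/s)(β - (3is/2)β²)Λ = (2√2 λ/s)Λ`
of the weak q-deformed oscillator into the second-order equation
`ξ'' + 2(δ-1)βξ' + [(1-2√2 s λ)/s² - (4i/s)β + (δ+1)(δ-3)β² + δβ']ξ = 0`. -/
theorem eigenvalue_equation_iff_xi_equation
    (s : ℝ) (hs : s ≠ 0) (δ lam : ℂ)
    (β Φ ξ Λ : ℝ → ℂ)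
    (hβ : Differentiable ℝ β)
    (hΦ : ∀ x : ℝ, HasDerivAt Φ (β x) x)
    (hξ : Differentiable ℝ ξ) (hξ' : Differentiable ℝ (deriv ξ))
    (hΛ : ∀ x : ℝ, Λ x = ξ x * Complex.exp (I * x / s + δ * Φ x)) :
    (∀ x : ℝ,
      deriv (deriv Λ) x - (2 * I / s) * (1 - I * s * β x) * deriv Λ x
        - (2 * I / s) * (β x - (3 * I * s / 2) * β x ^ 2) * Λ x
      = (2 * Real.sqrt 2 * lam / s) * Λ x) ↔
    (∀ x : ℝ,
      deriv (deriv ξ) x + 2 * (δ - 1) * β x * deriv ξ x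
        + ((1 - 2 * Real.sqrt 2 * s * lam) / s ^ 2 - (4 * I / s) * β x
            + (δ + 1) * (δ - 3) * β x ^ 2 + δ * deriv β x) * ξ x
      = 0) := by
  have hs' : (s : ℂ) ≠ 0 := Complex.ofReal_ne_zero.mpr hs
  set E : ℝ → ℂ := fun x => Complex.exp (I * x / s + δ * Φ x) with hE
  have hΛf : Λ = fun x => ξ x * E x := funext fun x => hΛ x
  have hg : ∀ x : ℝ, HasDerivAt (fun x : ℝ => I * (x : ℂ) / s + δ * Φ x)
      (I / s + δ * β x) x := by
    intro x
    have h1 : HasDerivAt (fun x : ℝ => I * (x : ℂ) / s) (I * 1 / s) x :=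
      (Complex.ofRealCLM.hasDerivAt.const_mul I).div_const s
    simpa [Pi.add_def] using h1.add ((hΦ x).const_mul δ)
  have hEd : ∀ x : ℝ, HasDerivAt E (E x * (I / s + δ * β x)) x := fun x => (hg x).cexp
  have hΛd : ∀ x : ℝ, HasDerivAt Λ
      (deriv ξ x * E x + ξ x * (E x * (I / s + δ * β x))) x := by
    intro x
    rw [hΛf]
    exact ((hξ x).hasDerivAt).mul (hEd x)
  have hdΛ : deriv Λ = fun x => deriv ξ x * E x + ξ x * (E x * (I / s + δ * β x)) :=
    funext fun x => (hΛd x).deriv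
  have hΛdd : ∀ x : ℝ, deriv (deriv Λ) x =
      deriv (deriv ξ) x * E x + deriv ξ x * (E x * (I / s + δ * β x))
        + (deriv ξ x * (E x * (I / s + δ * β x))
          + ξ x * (E x * (I / s + δ * β x) * (I / s + δ * β x)
                    + E x * (δ * deriv β x))) := by
    intro x
    rw [hdΛ]
    have hc : HasDerivAt (fun x : ℝ => I / (s : ℂ) + δ * β x) (δ * deriv β x) x := by
      simpa [Pi.add_def] using (hasDerivAt_const x (I / (s:ℂ))).add (((hβ x).hasDerivAt).const_mul δ)
    have h1 : HasDerivAt (fun x => deriv ξ x * E x)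
        (deriv (deriv ξ) x * E x + deriv ξ x * (E x * (I / s + δ * β x))) x :=
      ((hξ' x).hasDerivAt).mul (hEd x)
    have h2 : HasDerivAt (fun x => ξ x * (E x * (I / s + δ * β x)))
        (deriv ξ x * (E x * (I / s + δ * β x))
          + ξ x * (E x * (I / s + δ * β x) * (I / s + δ * β x)
                    + E x * (δ * deriv β x))) x :=
      ((hξ x).hasDerivAt).mul ((hEd x).mul hc)
    exact (h1.add h2).deriv
  have hΛE : ∀ x : ℝ, Λ x = ξ x * E x := hΛ
  have hst : (s : ℂ) * (s : ℂ)⁻¹ = 1 := mul_inv_cancel₀ hs'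
  have key : ∀ x : ℝ,
      (deriv (deriv Λ) x - (2 * I / s) * (1 - I * s * β x) * deriv Λ x
        - (2 * I / s) * (β x - (3 * I * s / 2) * β x ^ 2) * Λ x
        = (2 * Real.sqrt 2 * lam / s) * Λ x) ↔
      (deriv (deriv ξ) x + 2 * (δ - 1) * β x * deriv ξ x
        + ((1 - 2 * Real.sqrt 2 * s * lam) / s ^ 2 - (4 * I / s) * β x
            + (δ + 1) * (δ - 3) * β x ^ 2 + δ * deriv β x) * ξ x = 0) := by
    intro x
    have hEne : E x ≠ 0 := Complex.exp_ne_zero _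
    rw [hΛdd x]
    simp only [hΛE, hdΛ]
    have expand :
        (deriv (deriv ξ) x * E x + deriv ξ x * (E x * (I / s + δ * β x))
          + (deriv ξ x * (E x * (I / s + δ * β x))
            + ξ x * (E x * (I / s + δ * β x) * (I / s + δ * β x)
                      + E x * (δ * deriv β x)))
          - (2 * I / s) * (1 - I * s * β x)
              * (deriv ξ x * E x + ξ x * (E x * (I / s + δ * β x)))
          - (2 * I / s) * (β x - (3 * I * s / 2) * β x ^ 2) * (ξ x * E x))
          - (2 * Real.sqrt 2 * lam / s) * (ξ x * E x)
        = E x * (deriv (deriv ξ) x + 2 * (δ - 1) * β x * deriv ξ x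
            + ((1 - 2 * Real.sqrt 2 * s * lam) / s ^ 2 - (4 * I / s) * β x
                + (δ + 1) * (δ - 3) * β x ^ 2 + δ * deriv β x) * ξ x) := by
      linear_combination
        (E x * deriv ξ x * 2 * β x * (s : ℂ) * (s : ℂ)⁻¹
          + E x * ξ x * (-((s : ℂ)⁻¹ ^ 2) + 2 * I * (s : ℂ) * (s : ℂ)⁻¹ ^ 2 * β x
              + 2 * δ * (s : ℂ) * (s : ℂ)⁻¹ * β x ^ 2
              + 3 * (s : ℂ) * (s : ℂ)⁻¹ * β x ^ 2)) * Complex.I_sq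
        + (E x * deriv ξ x * (-2 * β x)
          + E x * ξ x * (2 * (Real.sqrt 2 : ℂ) * lam * (s : ℂ)⁻¹
              - 2 * I * (s : ℂ)⁻¹ * β x - 2 * δ * β x ^ 2 - 3 * β x ^ 2)) * hst
    constructor
    · intro h
      have h2 := sub_eq_zero.mpr h
      rw [expand] at h2
      rcases mul_eq_zero.mp h2 with h3 | h3
      · exact absurd h3 hEne
      · exact h3
    · intro h
      have h2 : _ = (0 : ℂ) := expand.trans (by rw [h, mul_zero])
      exact sub_eq_zero.mp h2
  exact forall_congr' key
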